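/- arXiv:2110.02579 — 2 statements merged into one kernel-verified Lean document; each statement's English description precedes it below -/
import Mathlib

section
/- Let n ≥ 2 and let λ_0 > λ_1 > … > λ_{n−1} > 0 be real numbers with Σ_{j=0}^{n−1} λ_j = n. Define ζ_I : [0, λ_0] → ℝ by ζ_I(θ) = (1/(2 ln 2)) · Σ_{j : λ_j > θ} ( (1/λ_j)(1 − θ/λ_j) + θ/λ_j − 1 ). Let k̄ be the largest index k such that λ_k ≥ 1. Then there exists θ with 0 < θ < λ_{k̄} such that ζ_I(θ) = 0. -/
open scoped Classical

noncomputable def zetaI (n : ℕ) (lam : Fin n → ℝ) (θ : ℝ) : ℝ :=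
  (1 / (2 * Real.log 2)) *
    ∑ j ∈ Finset.univ.filter (fun j : Fin n => θ < lam j),
      ((1 / lam j) * (1 - θ / lam j) + θ / lam j - 1)

lemma zetaI_eq (n : ℕ) (lam : Fin n → ℝ) (hpos : ∀ j, 0 < lam j) (θ : ℝ) :
    zetaI n lam θ = (1 / (2 * Real.log 2)) *
      ∑ j, (1 / lam j - 1) * max (1 - θ / lam j) 0 := by
  unfold zetaI
  congr 1
  rw [Finset.sum_filter]
  refine Finset.sum_congr rfl fun j _ => ?_
  have h := hpos j
  by_cases hj : θ < lam j
  · rw [if_pos hj]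
    have h1 : (0:ℝ) ≤ 1 - θ / lam j := by
      have := (div_lt_one h).2 hj
      linarith
    rw [max_eq_left h1]
    field_simp
    ring
  · rw [if_neg hj]
    push_neg at hj
    have h1 : 1 - θ / lam j ≤ 0 := by
      have := (one_le_div h).2 hj
      linarith
    rw [max_eq_right h1, mul_zero]

lemma zetaI_cont (n : ℕ) (lam : Fin n → ℝ) (hpos : ∀ j, 0 < lam j) :
    Continuous (zetaI n lam) := by
  have h : zetaI n lam = fun θ => (1 / (2 * Real.log 2)) *
      ∑ j, (1 / lam j - 1) * max (1 - θ / lam j) 0 :=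
    funext (zetaI_eq n lam hpos)
  rw [h]
  refine continuous_const.mul (continuous_finset_sum _ fun j _ => ?_)
  exact continuous_const.mul ((continuous_const.sub (continuous_id.div_const _)).max continuous_const)

/-- If `λ_0 > λ_1 > … > λ_{n−1} > 0` sum to `n` and `k̄` is the largest index
with `λ_k̄ ≥ 1`, then `ζ_I` vanishes at some `θ` with `0 < θ < λ_k̄`. -/
theorem stmt_4 (n : ℕ) (hn : 2 ≤ n) (lam : Fin n → ℝ)
    (hanti : ∀ i j : Fin n, i < j → lam j < lam i)
    (hpos : ∀ j, 0 < lam j)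
    (hsum : ∑ j, lam j = (n : ℝ))
    (kbar : Fin n) (hkbar : 1 ≤ lam kbar)
    (hkmax : ∀ k : Fin n, 1 ≤ lam k → k ≤ kbar) :
    ∃ θ : ℝ, 0 < θ ∧ θ < lam kbar ∧ zetaI n lam θ = 0 := by
  have hlog : 0 < Real.log 2 := Real.log_pos (by norm_num)
  have hc : 0 < 1 / (2 * Real.log 2) := by positivity
  have h0n : 0 < n := by omega
  set z : Fin n := ⟨0, h0n⟩ with hz
  have hzle : ∀ j : Fin n, lam j ≤ lam z := by
    intro j
    by_cases hj : z = j
    · rw [hj]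
    · have : z < j := by
        rw [Fin.lt_def]
        show 0 < (j : ℕ)
        rcases Nat.eq_zero_or_pos (j : ℕ) with h | h
        · exact absurd (Fin.ext h.symm : z = j) hj
        · exact h
      exact (hanti z j this).le
  -- λ_0 > 1
  have hlam0 : 1 < lam z := by
    have hlast : z < (⟨n-1, by omega⟩ : Fin n) := Fin.lt_def.2 (by simp [hz]; omega)
    have hlt : ∑ j, lam j < ∑ _j : Fin n, lam z :=
      Finset.sum_lt_sum (fun j _ => hzle j)
        ⟨⟨n-1, by omega⟩, Finset.mem_univ _, hanti _ _ hlast⟩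
    rw [hsum, Finset.sum_const, Finset.card_univ, Fintype.card_fin, nsmul_eq_mul] at hlt
    have hn' : (0:ℝ) < n := by positivity
    nlinarith
  -- kbar is not the last index
  have hk' : (kbar : ℕ) + 1 < n := by
    by_contra h
    have hkval : (kbar : ℕ) = n - 1 := by omega
    have hone : ∀ j : Fin n, (1:ℝ) ≤ lam j := by
      intro j
      by_cases hj : j = kbar
      · rw [hj]; exact hkbar
      · have : j < kbar := Fin.lt_def.2 (by
          have := j.isLt
          have : (j:ℕ) ≠ (kbar:ℕ) := fun h => hj (Fin.ext h)
          omega)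
        exact le_trans hkbar (hanti j kbar this).le
    have hlt : ∑ _j : Fin n, (1:ℝ) < ∑ j, lam j :=
      Finset.sum_lt_sum (fun j _ => hone j) ⟨z, Finset.mem_univ _, hlam0⟩
    rw [hsum, Finset.sum_const, Finset.card_univ, Fintype.card_fin, nsmul_eq_mul, mul_one] at hlt
    exact lt_irrefl _ hlt
  set ksucc : Fin n := ⟨(kbar : ℕ) + 1, hk'⟩ with hksucc
  have hkslt : kbar < ksucc := Fin.lt_def.2 (by simp [hksucc])
  have hlamks : lam ksucc < lam kbar := hanti kbar ksucc hkslt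
  set b : ℝ := (lam ksucc + lam kbar) / 2 with hbdef
  have hb1 : lam ksucc < b := by simp [hbdef]; linarith
  have hb2 : b < lam kbar := by simp [hbdef]; linarith
  have hbpos : 0 < b := lt_trans (hpos ksucc) hb1
  have hkz : lam kbar ≤ lam z := hzle kbar
  -- ζ(b) < 0
  have hzb : zetaI n lam b < 0 := by
    rw [zetaI_eq n lam hpos b]
    refine mul_neg_of_pos_of_neg hc ?_
    have hle : ∀ j ∈ Finset.univ, (1 / lam j - 1) * max (1 - b / lam j) 0 ≤ (0:ℝ) := by
      intro j _
      by_cases hj : b < lam j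
      · have hjk : j ≤ kbar := by
          by_contra hjk
          push_neg at hjk
          have : ksucc ≤ j := Fin.le_def.2 (by
            have := Fin.lt_def.1 hjk
            simp [hksucc]; omega)
          have : lam j ≤ lam ksucc := by
            rcases eq_or_lt_of_le this with h | h
            · rw [← h]
            · exact (hanti ksucc j h).le
          linarith
        have hjl : 1 ≤ lam j := by
          rcases eq_or_lt_of_le hjk with h | h
          · rw [h]; exact hkbar
          · exact le_trans hkbar (hanti j kbar h).le
        have h1 : 1 / lam j - 1 ≤ 0 := by
          have : 1 / lam j ≤ 1 := by
            rw [div_le_one (hpos j)]; exact hjl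
          linarith
        exact mul_nonpos_of_nonpos_of_nonneg h1 (le_max_right _ _)
      · push_neg at hj
        have h1 : 1 - b / lam j ≤ 0 := by
          have := (one_le_div (hpos j)).2 hj
          linarith
        rw [max_eq_right h1, mul_zero]
    have hex : (1 / lam z - 1) * max (1 - b / lam z) 0 < 0 := by
      have h1 : 1 / lam z - 1 < 0 := by
        have : 1 / lam z < 1 := by
          rw [div_lt_one (hpos z)]; exact hlam0
        linarith
      have h2 : 0 < 1 - b / lam z := by
        have : b / lam z < 1 := by
          rw [div_lt_one (hpos z)]; linarith
        linarith
      rw [max_eq_left h2.le]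
      exact mul_neg_of_neg_of_pos h1 h2
    calc ∑ j, (1 / lam j - 1) * max (1 - b / lam j) 0
        < ∑ _j : Fin n, (0:ℝ) :=
          Finset.sum_lt_sum hle ⟨z, Finset.mem_univ _, by simpa using hex⟩
      _ = 0 := by simp
  -- ζ(0) > 0
  have hz0 : 0 < zetaI n lam 0 := by
    rw [zetaI_eq n lam hpos 0]
    refine mul_pos hc ?_
    have hsimp : ∀ j : Fin n, (1 / lam j - 1) * max (1 - (0:ℝ) / lam j) 0 = 1 / lam j - 1 := by
      intro j; norm_num
    rw [Finset.sum_congr rfl fun j _ => hsimp j]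
    have hinv : (n:ℝ) < ∑ j, 1 / lam j := by
      have h2 : ∑ _j : Fin n, (2:ℝ) < ∑ j, (1 / lam j + lam j) := by
        refine Finset.sum_lt_sum (fun j _ => ?_) ⟨z, Finset.mem_univ _, ?_⟩
        · have hp := hpos j
          have h := sq_nonneg (lam j - 1)
          rw [div_add' _ _ _ hp.ne']
          rw [le_div_iff₀ hp]
          nlinarith
        · have hp := hpos z
          rw [div_add' _ _ _ hp.ne', lt_div_iff₀ hp]
          nlinarith
      rw [Finset.sum_const, Finset.card_univ, Fintype.card_fin, nsmul_eq_mul,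
        Finset.sum_add_distrib, hsum] at h2
      linarith
    have : ∑ j, (1 / lam j - 1) = (∑ j, 1 / lam j) - n := by
      rw [Finset.sum_sub_distrib, Finset.sum_const, Finset.card_univ, Fintype.card_fin,
        nsmul_eq_mul, mul_one]
    rw [this]
    linarith
  -- IVT
  have hcont : ContinuousOn (zetaI n lam) (Set.Icc 0 b) := (zetaI_cont n lam hpos).continuousOn
  have hivt := intermediate_value_Icc' hbpos.le hcont
  obtain ⟨θ, hθmem, hθ⟩ := hivt ⟨hzb.le, hz0.le⟩
  refine ⟨θ, ?_, lt_of_le_of_lt hθmem.2 hb2, hθ⟩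
  rcases eq_or_lt_of_le hθmem.1 with h | h
  · exfalso; rw [← h] at hθ; exact hz0.ne' hθ
  · exact h
end

section
/- Let n ≥ 2 and let λ_0 > λ_1 > … > λ_{n−1} > 0 be real numbers with Σ_{j=0}^{n−1} λ_j = n. Define ζ_I : [0, λ_0] → ℝ by ζ_I(θ) = (1/(2 ln 2)) · Σ_{j : λ_j > θ} ( (1/λ_j)(1 − θ/λ_j) + θ/λ_j − 1 ). Let k̄ be the largest index k such that λ_k ≥ 1. Then ζ_I(λ_0) = 0 and ζ_I(θ) < 0 for every θ in the open interval (λ_{k̄}, λ_0). -/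
open scoped Classical

/-- If `λ_0 > λ_1 > … > λ_{n−1} > 0` sum to `n` and `k̄` is the largest index
with `λ_k̄ ≥ 1`, then `ζ_I(λ_0) = 0` and `ζ_I(θ) < 0` for `θ ∈ (λ_k̄, λ_0)`. -/
theorem stmt_6 (n : ℕ) (hn : 2 ≤ n) (lam : Fin n → ℝ)
    (hanti : ∀ i j : Fin n, i < j → lam j < lam i)
    (hpos : ∀ j, 0 < lam j)
    (hsum : ∑ j, lam j = (n : ℝ))
    (kbar : Fin n) (hkbar : 1 ≤ lam kbar)
    (hkmax : ∀ k : Fin n, 1 ≤ lam k → k ≤ kbar) :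
    zetaI n lam (lam ⟨0, by omega⟩) = 0 ∧
      ∀ θ ∈ Set.Ioo (lam kbar) (lam ⟨0, by omega⟩), zetaI n lam θ < 0 := by
  have h2 : (0:ℝ) < 1 / (2 * Real.log 2) := by
    have := Real.log_pos (by norm_num : (1:ℝ) < 2)
    positivity
  constructor
  · unfold zetaI
    have : (Finset.univ.filter (fun j : Fin n => lam ⟨0, by omega⟩ < lam j)) = ∅ := by
      apply Finset.filter_eq_empty_iff.mpr
      intro j _
      rcases eq_or_ne j ⟨0, by omega⟩ with h | h
      · simp [h]
      · have : (⟨0, by omega⟩ : Fin n) < j := by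
          have hj0 : j.val ≠ 0 := fun hh => h (Fin.ext hh)
          simp [Fin.lt_def, Nat.pos_of_ne_zero hj0]
        exact not_lt.mpr (le_of_lt (hanti _ _ this))
    rw [this]
    simp
  · rintro θ ⟨hθ1, hθ2⟩
    unfold zetaI
    apply mul_neg_of_pos_of_neg h2
    refine Finset.sum_neg (fun j hj => ?_) ⟨⟨0, by omega⟩, by simp [hθ2]⟩
    simp only [Finset.mem_filter] at hj
    have hlj : θ < lam j := hj.2
    have h1 : (1:ℝ) < lam j := lt_of_le_of_lt (le_trans hkbar (le_of_lt hθ1)) hlj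
    have hθ1' : (1:ℝ) ≤ θ := le_trans hkbar (le_of_lt hθ1)
    have hpj : (0:ℝ) < lam j := hpos j
    have key : (1 / lam j) * (1 - θ / lam j) + θ / lam j - 1
        = (1 / lam j - 1) * (1 - θ / lam j) := by ring
    rw [key]
    apply mul_neg_of_neg_of_pos
    · have : 1 / lam j < 1 := by
        rw [div_lt_one hpj]; exact h1
      linarith
    · have : θ / lam j < 1 := (div_lt_one hpj).mpr hlj
      linarith
end
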